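/- Let q be a prime power and n ≥ 2. Let P·A be the subgroup of GL_n(F_q) consisting of all invertible matrices g whose last row vanishes off the diagonal, i.e., g_{n,i} = 0 for all 1 ≤ i ≤ n-1. Then the normal core of P·A in GL_n(F_q) equals the center Z of GL_n(F_q), the subgroup of nonzero scalar matrices. -/

import Mathlib

open Matrix

/-- The last index of `Fin n`. -/
def lastIdx (n : ℕ) (hn : 0 < n) : Fin n := ⟨n - 1, by omega⟩

/-- The subgroup `P·A` of `GL_n(F)` of invertible matrices whose last row
vanishes off the diagonal. -/
def PA (n : ℕ) (hn : 0 < n) (F : Type) [Field F] [DecidableEq F] :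
    Subgroup (GL (Fin n) F) where
  carrier := {g | ∀ i : Fin n, i ≠ lastIdx n hn →
      (g : Matrix (Fin n) (Fin n) F) (lastIdx n hn) i = 0}
  one_mem' := by
    intro i hi
    exact Matrix.one_apply_ne (Ne.symm hi)
  mul_mem' := by
    intro g h hg hh i hi
    have hval : ((g * h : GL (Fin n) F) : Matrix (Fin n) (Fin n) F)
        = (g : Matrix (Fin n) (Fin n) F) * (h : Matrix (Fin n) (Fin n) F) := rfl
    rw [Set.mem_setOf_eq] at *
    rw [hval, Matrix.mul_apply]
    refine Finset.sum_eq_zero fun k _ => ?_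
    by_cases hk : k = lastIdx n hn
    · rw [hk, hh i hi, mul_zero]
    · rw [hg k hk, zero_mul]
  inv_mem' := by
    intro g hg
    rw [Set.mem_setOf_eq] at *
    have key : ∀ j : Fin n,
        (g : Matrix (Fin n) (Fin n) F) (lastIdx n hn) (lastIdx n hn) *
          ((g⁻¹ : GL (Fin n) F) : Matrix (Fin n) (Fin n) F) (lastIdx n hn) j
        = (1 : Matrix (Fin n) (Fin n) F) (lastIdx n hn) j := by
      intro j
      have h1 : ((g : Matrix (Fin n) (Fin n) F) *
          ((g⁻¹ : GL (Fin n) F) : Matrix (Fin n) (Fin n) F))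
          = (1 : Matrix (Fin n) (Fin n) F) := by
        have : ((g * g⁻¹ : GL (Fin n) F) : Matrix (Fin n) (Fin n) F)
            = (1 : Matrix (Fin n) (Fin n) F) := by rw [mul_inv_cancel]; rfl
        rw [← this]; rfl
      have h2 := congrFun (congrFun h1 (lastIdx n hn)) j
      rw [Matrix.mul_apply] at h2
      rw [Finset.sum_eq_single (lastIdx n hn)
        (fun k _ hk => by rw [hg k hk, zero_mul])
        (by intro h; exact absurd (Finset.mem_univ _) h)] at h2
      exact h2
    have hLL : (g : Matrix (Fin n) (Fin n) F) (lastIdx n hn) (lastIdx n hn) ≠ 0 := by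
      have := key (lastIdx n hn)
      rw [Matrix.one_apply_eq] at this
      exact left_ne_zero_of_mul_eq_one this
    intro i hi
    have := key i
    rw [Matrix.one_apply_ne (Ne.symm hi)] at this
    exact (mul_eq_zero.mp this).resolve_left hLL

/-- The center of `GL_n(F)`: the subgroup of nonzero scalar matrices, realized as
the range of the homomorphism `Fˣ →* GL_n(F)` sending `a` to `a • 1`. -/
def scalarCenter (n : ℕ) (F : Type) [Field F] [DecidableEq F] :
    Subgroup (GL (Fin n) F) :=
  (Units.map (Matrix.scalar (Fin n)).toMonoidHom : Fˣ →* GL (Fin n) F).range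

theorem stmt_7 (q n : ℕ) (hq : IsPrimePow q) (hn : 2 ≤ n)
    (F : Type) [Field F] [Fintype F] [DecidableEq F] (hF : Fintype.card F = q) :
    (PA n (by omega) F).normalCore = scalarCenter n F := by
  
  have hn0 : 0 < n := by omega
  set L : Fin n := lastIdx n hn0 with hL
  apply le_antisymm
  · -- normalCore ≤ scalarCenter
    intro g hg
    have hg' : ∀ b : GL (Fin n) F, b * g * b⁻¹ ∈ PA n (by omega) F := hg
    set M : Matrix (Fin n) (Fin n) F := (g : Matrix (Fin n) (Fin n) F) with hM
    -- Step 1: off-diagonal entries of M vanish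
    have hdiag : ∀ i j : Fin n, j ≠ i → M i j = 0 := by
      intro i j hji
      set σ : Equiv.Perm (Fin n) := Equiv.swap L i with hσ
      set P : Matrix (Fin n) (Fin n) F := σ.toPEquiv.toMatrix with hP
      have hPP : P * P = 1 := by
        rw [hP, PEquiv.toMatrix_toPEquiv_mul, ← mul_one (Equiv.toPEquiv σ).toMatrix,
          PEquiv.toMatrix_toPEquiv_mul, Matrix.submatrix_submatrix]
        have hσσ : (⇑σ ∘ ⇑σ) = id := funext fun x => Equiv.swap_apply_self _ _ x
        rw [hσσ, Function.comp_id, Matrix.submatrix_id_id]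
      set b : GL (Fin n) F := ⟨P, P, hPP, hPP⟩ with hb
      have hmem : ∀ k, k ≠ L → ((b * g * b⁻¹ : GL (Fin n) F) :
          Matrix (Fin n) (Fin n) F) L k = 0 := hg' b
      have hval : ((b * g * b⁻¹ : GL (Fin n) F) : Matrix (Fin n) (Fin n) F)
          = P * M * P := rfl
      have hne : σ j ≠ L := by
        intro h
        apply hji
        have : σ (σ j) = σ L := by rw [h]
        rwa [Equiv.swap_apply_self, Equiv.swap_apply_left] at this
      have h0 := hmem (σ j) hne
      rw [hval, PEquiv.toMatrix_toPEquiv_mul, PEquiv.mul_toMatrix_toPEquiv,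
        Matrix.submatrix_apply, Matrix.submatrix_apply, id] at h0
      have hσL : σ L = i := Equiv.swap_apply_left L i
      have hσσj : σ.symm (σ j) = j := Equiv.symm_apply_apply σ j
      rwa [hσL, hσσj] at h0
    -- Step 2: diagonal entries are all equal
    have hscal : ∀ i : Fin n, i ≠ L → M i i = M L L := by
      intro i hi
      set E : Matrix (Fin n) (Fin n) F := Matrix.single L i 1 with hE
      have hE2 : E * E = 0 := Matrix.single_mul_single_of_ne (c := (1 : F)) L i L hi 1
      have h1 : (1 + E) * (1 - E) = 1 := by
        have : (1 + E) * (1 - E) = 1 - E * E := by noncomm_ring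
        rw [this, hE2, sub_zero]
      have h2 : (1 - E) * (1 + E) = 1 := by
        have : (1 - E) * (1 + E) = 1 - E * E := by noncomm_ring
        rw [this, hE2, sub_zero]
      set b : GL (Fin n) F := ⟨1 + E, 1 - E, h1, h2⟩ with hb
      have hmem : ∀ k, k ≠ L → ((b * g * b⁻¹ : GL (Fin n) F) :
          Matrix (Fin n) (Fin n) F) L k = 0 := hg' b
      have hval : ((b * g * b⁻¹ : GL (Fin n) F) : Matrix (Fin n) (Fin n) F)
          = (1 + E) * M * (1 - E) := rfl
      have h0 := hmem i hi
      rw [hval] at h0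
      have hexp : ((1 + E) * M * (1 - E)) L i = M i i - M L L := by
        have e1 : (1 + E) * M * (1 - E) = M + E * M - (M * E + E * M * E) := by
          noncomm_ring
        rw [e1, Matrix.sub_apply, Matrix.add_apply, Matrix.add_apply, hE,
          Matrix.single_mul_apply_same,
          Matrix.mul_single_apply_same,
          Matrix.mul_single_apply_same,
          Matrix.single_mul_apply_same,
          hdiag L i hi, hdiag i L (Ne.symm hi)]
        ring
      rw [hexp] at h0
      exact sub_eq_zero.mp h0
    -- M is the scalar matrix with entry M L L
    have hMs : M = Matrix.scalar (Fin n) (M L L) := by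
      ext a c
      rw [Matrix.scalar_apply]
      by_cases hac : a = c
      · subst hac
        rw [Matrix.diagonal_apply_eq]
        by_cases haL : a = L
        · rw [haL]
        · exact hscal a haL
      · rw [Matrix.diagonal_apply_ne _ hac, hdiag a c (Ne.symm hac)]
    -- The scalar is nonzero
    have hc : M L L ≠ 0 := by
      have hinv : M * ((g⁻¹ : GL (Fin n) F) : Matrix (Fin n) (Fin n) F) = 1 := by
        have : ((g * g⁻¹ : GL (Fin n) F) : Matrix (Fin n) (Fin n) F) = 1 := by
          rw [mul_inv_cancel]; rfl
        rw [← this]; rfl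
      have h2 := congrFun (congrFun hinv L) L
      rw [Matrix.mul_apply, Finset.sum_eq_single L
        (fun k _ hk => by rw [hdiag L k hk, zero_mul])
        (by intro h; exact absurd (Finset.mem_univ _) h), Matrix.one_apply_eq] at h2
      exact left_ne_zero_of_mul_eq_one h2
    refine ⟨Units.mk0 (M L L) hc, Units.ext ?_⟩
    exact hMs.symm
  · -- scalarCenter ≤ normalCore
    rintro g ⟨a, rfl⟩
    intro b
    have hc : Commute (Matrix.scalar (Fin n) (a : F)) (b : Matrix (Fin n) (Fin n) F) :=
      Matrix.scalar_commute _ (fun r' => Commute.all _ _) _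
    have hval : ((b * Units.map (Matrix.scalar (Fin n)).toMonoidHom a * b⁻¹ :
        GL (Fin n) F) : Matrix (Fin n) (Fin n) F) = Matrix.scalar (Fin n) (a : F) := by
      show (b : Matrix (Fin n) (Fin n) F) * Matrix.scalar (Fin n) (a : F) *
        ((b⁻¹ : GL (Fin n) F) : Matrix (Fin n) (Fin n) F) = _
      rw [← hc.eq, mul_assoc]
      have : (b : Matrix (Fin n) (Fin n) F) *
          ((b⁻¹ : GL (Fin n) F) : Matrix (Fin n) (Fin n) F) = 1 := by
        have : ((b * b⁻¹ : GL (Fin n) F) : Matrix (Fin n) (Fin n) F) = 1 := by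
          rw [mul_inv_cancel]; rfl
        rw [← this]; rfl
      rw [this, mul_one]
    show ∀ i, i ≠ L → _
    intro i hi
    rw [hval, Matrix.scalar_apply, Matrix.diagonal_apply_ne _ (Ne.symm hi)]
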